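/- arXiv:2311.06468 — 2 statements merged into one kernel-verified Lean document; each statement's English description precedes it below -/
import Mathlib

section
/- Let λ ∈ [0,2π) and assume inf_{x∈ℤ} |e^{iλ} − a_x^{(2,2)}| > 0. Then e^{iλ} is an eigenvalue of the time-evolution operator U if and only if there exists a nonzero Ψ̃ ∈ ℓ²(ℤ;ℂ²) such that for every x ∈ ℤ: e^{iλ} Ψ̃₁(x) = A_x(λ) Ψ̃₁(x+1) + B_x(λ) Ψ̃₂(x) and e^{iλ} Ψ̃₂(x+1) = C_x(λ) Ψ̃₁(x+1) + D_x(λ) Ψ̃₂(x). -/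
open Complex Matrix ComplexConjugate

noncomputable section

/-- `μ` is an eigenvalue of the time-evolution operator `U = SC` of the three-state
quantum walk on `ℤ` with coin matrices `a x`: there is a nonzero square-summable
`Ψ : ℤ → ℂ³` with `UΨ = μΨ` (written componentwise, with the shift moving the first
component left and the third component right). -/
def IsQWEigenvalue (a : ℤ → Matrix (Fin 3) (Fin 3) ℂ) (μ : ℂ) : Prop :=
  ∃ Ψ : ℤ → Fin 3 → ℂ, Ψ ≠ 0 ∧
    Summable (fun x : ℤ => ∑ i, ‖Ψ x i‖ ^ 2) ∧
    ∀ x : ℤ,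
      μ * Ψ x 0 = ∑ j, a (x + 1) 0 j * Ψ (x + 1) j ∧
      μ * Ψ x 1 = ∑ j, a x 1 j * Ψ x j ∧
      μ * Ψ x 2 = ∑ j, a (x - 1) 2 j * Ψ (x - 1) j

/-- `A(λ)` for a 3×3 coin matrix `M`. -/
def coefA (M : Matrix (Fin 3) (Fin 3) ℂ) (lam : ℝ) : ℂ :=
  M 0 0 + M 0 1 * M 1 0 / (Complex.exp (lam * Complex.I) - M 1 1)

/-- `B(λ)` for a 3×3 coin matrix `M`. -/
def coefB (M : Matrix (Fin 3) (Fin 3) ℂ) (lam : ℝ) : ℂ :=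
  M 0 2 + M 0 1 * M 1 2 / (Complex.exp (lam * Complex.I) - M 1 1)

/-- `C(λ)` for a 3×3 coin matrix `M`. -/
def coefC (M : Matrix (Fin 3) (Fin 3) ℂ) (lam : ℝ) : ℂ :=
  M 2 0 + M 2 1 * M 1 0 / (Complex.exp (lam * Complex.I) - M 1 1)

/-- `D(λ)` for a 3×3 coin matrix `M`. -/
def coefD (M : Matrix (Fin 3) (Fin 3) ℂ) (lam : ℝ) : ℂ :=
  M 2 2 + M 2 1 * M 1 2 / (Complex.exp (lam * Complex.I) - M 1 1)

private lemma summable_component {n : ℕ} {f : ℤ → Fin n → ℂ}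
    (h : Summable fun x => ∑ i, ‖f x i‖ ^ 2) (i₀ : Fin n) :
    Summable fun x => ‖f x i₀‖ ^ 2 := by
  refine Summable.of_nonneg_of_le (fun x => by positivity) (fun x => ?_) h
  exact Finset.single_le_sum (f := fun i => ‖f x i‖ ^ 2) (fun i _ => by positivity)
    (Finset.mem_univ i₀)

/-- `e^{iλ}` is an eigenvalue of `U` iff there is a nonzero
`Ψ̃ ∈ ℓ²(ℤ;ℂ²)` with `e^{iλ} Ψ̃₁(x) = A_x(λ) Ψ̃₁(x+1) + B_x(λ) Ψ̃₂(x)` and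
`e^{iλ} Ψ̃₂(x+1) = C_x(λ) Ψ̃₁(x+1) + D_x(λ) Ψ̃₂(x)` for all `x`. -/
theorem eigenvalue_iff_reduced_system (a : ℤ → Matrix (Fin 3) (Fin 3) ℂ)
    (hunit : ∀ x, a x ∈ Matrix.unitaryGroup (Fin 3) ℂ)
    (h13 : ∀ x, ‖a x 0 2‖ ≠ 1) (h22 : ∀ x, ‖a x 1 1‖ ≠ 1) (h31 : ∀ x, ‖a x 2 0‖ ≠ 1)
    (lam : ℝ) (hlam : lam ∈ Set.Ico 0 (2 * Real.pi))
    (hinf : 0 < ⨅ x : ℤ, ‖Complex.exp (lam * Complex.I) - a x 1 1‖) :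
    IsQWEigenvalue a (Complex.exp (lam * Complex.I)) ↔
      ∃ Ψ : ℤ → Fin 2 → ℂ, Ψ ≠ 0 ∧
        Summable (fun x : ℤ => ∑ i, ‖Ψ x i‖ ^ 2) ∧
        ∀ x : ℤ,
          Complex.exp (lam * Complex.I) * Ψ x 0 =
              coefA (a x) lam * Ψ (x + 1) 0 + coefB (a x) lam * Ψ x 1 ∧
          Complex.exp (lam * Complex.I) * Ψ (x + 1) 1 =
              coefC (a x) lam * Ψ (x + 1) 0 + coefD (a x) lam * Ψ x 1 := by
  set μ := Complex.exp (lam * Complex.I) with hμ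
  set ε := ⨅ x : ℤ, ‖μ - a x 1 1‖ with hε
  have hbdd : BddBelow (Set.range fun x : ℤ => ‖μ - a x 1 1‖) := by
    refine ⟨0, ?_⟩
    rintro y ⟨x, rfl⟩
    exact norm_nonneg _
  have hεle : ∀ x : ℤ, ε ≤ ‖μ - a x 1 1‖ := fun x => ciInf_le hbdd x
  have hd : ∀ x : ℤ, μ - a x 1 1 ≠ 0 := by
    intro x h0
    have h1 := hεle x
    rw [h0, norm_zero] at h1
    exact absurd (lt_of_lt_of_le hinf h1) (lt_irrefl 0)
  constructor
  · -- forward direction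
    rintro ⟨Ψ, hne, hsum, heq⟩
    refine ⟨fun x => ![Ψ (x - 1) 0, Ψ x 2], ?_, ?_, ?_⟩
    · intro h0
      have hz0 : ∀ x : ℤ, Ψ x 0 = 0 := by
        intro x
        have := congrFun (congrFun h0 (x + 1)) 0
        simpa using this
      have hz2 : ∀ x : ℤ, Ψ x 2 = 0 := by
        intro x
        have := congrFun (congrFun h0 x) 1
        simpa using this
      have hz1 : ∀ x : ℤ, Ψ x 1 = 0 := by
        intro x
        have h2 := (heq x).2.1
        rw [Fin.sum_univ_three] at h2
        have hmul : (μ - a x 1 1) * Ψ x 1 = 0 := by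
          linear_combination h2 + a x 1 0 * hz0 x + a x 1 2 * hz2 x
        rcases mul_eq_zero.mp hmul with h | h
        · exact absurd h (hd x)
        · exact h
      apply hne
      funext x i
      fin_cases i
      · exact hz0 x
      · exact hz1 x
      · exact hz2 x
    · have s0 : Summable fun x : ℤ => ‖Ψ x 0‖ ^ 2 := summable_component hsum 0
      have s2 : Summable fun x : ℤ => ‖Ψ x 2‖ ^ 2 := summable_component hsum 2
      have s0' : Summable fun x : ℤ => ‖Ψ (x - 1) 0‖ ^ 2 := by
        have h := ((Equiv.subRight (1 : ℤ)).summable_iff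
          (f := fun x : ℤ => ‖Ψ x 0‖ ^ 2)).mpr s0
        simpa [Function.comp_def] using h
      have := s0'.add s2
      simpa [Fin.sum_univ_two] using this
    · intro x
      have h2 := (heq x).2.1
      rw [Fin.sum_univ_three] at h2
      constructor
      · have h1 := (heq (x - 1)).1
        simp only [sub_add_cancel] at h1
        rw [Fin.sum_univ_three] at h1
        simp only [Matrix.cons_val_zero, Matrix.cons_val_one, Matrix.head_cons,
          add_sub_cancel_right]
        rw [coefA, coefB, ← hμ]
        field_simp [hd x]
        linear_combination (μ - a x 1 1) * h1 + a x 0 1 * h2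
      · have h3 := (heq (x + 1)).2.2
        simp only [add_sub_cancel_right] at h3
        rw [Fin.sum_univ_three] at h3
        simp only [Matrix.cons_val_zero, Matrix.cons_val_one, Matrix.head_cons,
          add_sub_cancel_right]
        rw [coefC, coefD, ← hμ]
        field_simp [hd x]
        linear_combination (μ - a x 1 1) * h3 + a x 2 1 * h2
  · -- backward direction
    rintro ⟨Ψ, hne, hsum, heq⟩
    refine ⟨fun x => ![Ψ (x + 1) 0,
        (a x 1 0 * Ψ (x + 1) 0 + a x 1 2 * Ψ x 1) / (μ - a x 1 1), Ψ x 1], ?_, ?_, ?_⟩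
    · intro h0
      have hz0 : ∀ x : ℤ, Ψ x 0 = 0 := by
        intro x
        have := congrFun (congrFun h0 (x - 1)) 0
        simpa [sub_add_cancel] using this
      have hz1 : ∀ x : ℤ, Ψ x 1 = 0 := by
        intro x
        have := congrFun (congrFun h0 x) 2
        simpa using this
      apply hne
      funext x i
      fin_cases i
      · exact hz0 x
      · exact hz1 x
    · have s0 : Summable fun x : ℤ => ‖Ψ x 0‖ ^ 2 := summable_component hsum 0
      have s1 : Summable fun x : ℤ => ‖Ψ x 1‖ ^ 2 := summable_component hsum 1
      have s0' : Summable fun x : ℤ => ‖Ψ (x + 1) 0‖ ^ 2 := by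
        have h := ((Equiv.addRight (1 : ℤ)).summable_iff
          (f := fun x : ℤ => ‖Ψ x 0‖ ^ 2)).mpr s0
        simpa [Function.comp_def] using h
      have s1' : Summable fun x : ℤ => ‖Ψ x 1‖ ^ 2 := s1
      have hmid : ∀ x : ℤ,
          ‖(a x 1 0 * Ψ (x + 1) 0 + a x 1 2 * Ψ x 1) / (μ - a x 1 1)‖ ^ 2 ≤
            2 * (‖Ψ (x + 1) 0‖ ^ 2 + ‖Ψ x 1‖ ^ 2) / ε ^ 2 := by
        intro x
        have hnum : ‖a x 1 0 * Ψ (x + 1) 0 + a x 1 2 * Ψ x 1‖ ≤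
            ‖Ψ (x + 1) 0‖ + ‖Ψ x 1‖ := by
          calc ‖a x 1 0 * Ψ (x + 1) 0 + a x 1 2 * Ψ x 1‖
              ≤ ‖a x 1 0 * Ψ (x + 1) 0‖ + ‖a x 1 2 * Ψ x 1‖ := norm_add_le _ _
            _ = ‖a x 1 0‖ * ‖Ψ (x + 1) 0‖ + ‖a x 1 2‖ * ‖Ψ x 1‖ := by
                rw [norm_mul, norm_mul]
            _ ≤ 1 * ‖Ψ (x + 1) 0‖ + 1 * ‖Ψ x 1‖ := by
                gcongr
                · exact entry_norm_bound_of_unitary (hunit x) 1 0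
                · exact entry_norm_bound_of_unitary (hunit x) 1 2
            _ = ‖Ψ (x + 1) 0‖ + ‖Ψ x 1‖ := by ring
        have hden : ε ≤ ‖μ - a x 1 1‖ := hεle x
        have h1 : ‖(a x 1 0 * Ψ (x + 1) 0 + a x 1 2 * Ψ x 1) / (μ - a x 1 1)‖ ≤
            (‖Ψ (x + 1) 0‖ + ‖Ψ x 1‖) / ε := by
          rw [norm_div]
          exact div_le_div₀ (by positivity) hnum hinf hden
        calc ‖(a x 1 0 * Ψ (x + 1) 0 + a x 1 2 * Ψ x 1) / (μ - a x 1 1)‖ ^ 2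
            ≤ ((‖Ψ (x + 1) 0‖ + ‖Ψ x 1‖) / ε) ^ 2 :=
              pow_le_pow_left₀ (norm_nonneg _) h1 2
          _ = (‖Ψ (x + 1) 0‖ + ‖Ψ x 1‖) ^ 2 / ε ^ 2 := by rw [div_pow]
          _ ≤ 2 * (‖Ψ (x + 1) 0‖ ^ 2 + ‖Ψ x 1‖ ^ 2) / ε ^ 2 := by
              gcongr
              nlinarith [sq_nonneg (‖Ψ (x + 1) 0‖ - ‖Ψ x 1‖)]
      have sbound : Summable fun x : ℤ =>
          ‖Ψ (x + 1) 0‖ ^ 2 + 2 * (‖Ψ (x + 1) 0‖ ^ 2 + ‖Ψ x 1‖ ^ 2) / ε ^ 2 +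
            ‖Ψ x 1‖ ^ 2 :=
        (s0'.add (((s0'.add s1').mul_left 2).div_const (ε ^ 2))).add s1'
      refine Summable.of_nonneg_of_le (fun x => ?_) (fun x => ?_) sbound
      · positivity
      · rw [Fin.sum_univ_three]
        simp only [Matrix.cons_val_zero, Matrix.cons_val_one, Matrix.head_cons,
          Matrix.cons_val_two, Matrix.tail_cons]
        have := hmid x
        linarith
    · intro x
      have hx1 := (heq (x + 1)).1
      have hx2 := (heq x).2
      refine ⟨?_, ?_, ?_⟩
      · simp only [Matrix.cons_val_zero, Matrix.cons_val_one, Matrix.head_cons,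
          Matrix.cons_val_two, Matrix.tail_cons, Fin.sum_univ_three]
        rw [coefA, coefB, ← hμ] at hx1
        field_simp [hd (x + 1)]
        field_simp [hd (x + 1)] at hx1
        linear_combination hx1
      · simp only [Matrix.cons_val_zero, Matrix.cons_val_one, Matrix.head_cons,
          Matrix.cons_val_two, Matrix.tail_cons, Fin.sum_univ_three]
        field_simp [hd x]
        ring
      · have hx3 := (heq (x - 1)).2
        simp only [sub_add_cancel] at hx3
        simp only [Matrix.cons_val_zero, Matrix.cons_val_one, Matrix.head_cons,
          Matrix.cons_val_two, Matrix.tail_cons, Fin.sum_univ_three, sub_add_cancel]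
        rw [coefC, coefD, ← hμ] at hx3
        field_simp [hd (x - 1)]
        field_simp [hd (x - 1)] at hx3
        linear_combination hx3
end
end

section
/- Let λ ∈ [0,2π) and assume inf_{x∈ℤ} |e^{iλ} − a_x^{(2,2)}| > 0. Then e^{iλ} is an eigenvalue of U if and only if there exists a nonzero Ψ̃ ∈ ℓ²(ℤ;ℂ²) such that: for every x with A_x(λ) ≠ 0, Ψ̃(x+1) = T_x(λ) Ψ̃(x); and for every x with A_x(λ) = 0, conj(a_x^{(1,1)}) a_x^{(2,1)} Ψ̃₁(x) = a_x^{(3,3)} conj(a_x^{(3,2)}) Ψ̃₂(x) and a_x^{(3,3)} conj(a_x^{(2,3)}) Ψ̃₁(x+1) = conj(a_x^{(1,1)}) a_x^{(1,2)} Ψ̃₂(x+1). -/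
open Complex Matrix ComplexConjugate

noncomputable section

/-- The transfer matrix `T(λ)` of a 3×3 coin matrix `M`. -/
def transfer (M : Matrix (Fin 3) (Fin 3) ℂ) (lam : ℝ) : Matrix (Fin 2) (Fin 2) ℂ :=
  (M 0 0 * Complex.exp (lam * Complex.I) - M.det * conj (M 2 2))⁻¹ •
    !![Complex.exp (lam * Complex.I) * (Complex.exp (lam * Complex.I) - M 1 1),
        -(M 0 2 * Complex.exp (lam * Complex.I)) - M.det * conj (M 2 0);
        M 2 0 * Complex.exp (lam * Complex.I) + M.det * conj (M 0 2),
        -(M.det * (Complex.exp (-(lam * Complex.I)) - conj (M 1 1)))]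

namespace QWaux

variable {M : Matrix (Fin 3) (Fin 3) ℂ} {lam : ℝ}

lemma adj_eq (hM : M ∈ Matrix.unitaryGroup (Fin 3) ℂ) :
    Matrix.adjugate M = M.det • Mᴴ := by
  have h1 : Mᴴ * M = 1 := mem_unitaryGroup_iff'.mp hM
  calc Matrix.adjugate M = (Mᴴ * M) * Matrix.adjugate M := by rw [h1, one_mul]
    _ = Mᴴ * (M * Matrix.adjugate M) := by rw [mul_assoc]
    _ = Mᴴ * (M.det • 1) := by rw [Matrix.mul_adjugate]
    _ = M.det • Mᴴ := by rw [Matrix.mul_smul, mul_one]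

lemma detconj (hM : M ∈ Matrix.unitaryGroup (Fin 3) ℂ) (i j : Fin 3) :
    M.det * conj (M j i) = Matrix.adjugate M i j := by
  rw [adj_eq hM]
  simp [Matrix.smul_apply, Matrix.conjTranspose_apply]

lemma colsum (hM : M ∈ Matrix.unitaryGroup (Fin 3) ℂ) (i j : Fin 3) :
    ∑ k, conj (M k i) * M k j = if i = j then 1 else 0 := by
  have h1 : Mᴴ * M = 1 := mem_unitaryGroup_iff'.mp hM
  have := congrFun (congrFun h1 i) j
  simpa [Matrix.mul_apply, Matrix.conjTranspose_apply, Matrix.one_apply] using this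

lemma rowsum (hM : M ∈ Matrix.unitaryGroup (Fin 3) ℂ) (i j : Fin 3) :
    ∑ k, M i k * conj (M j k) = if i = j then 1 else 0 := by
  have h1 : M * Mᴴ = 1 := mem_unitaryGroup_iff.mp hM
  have := congrFun (congrFun h1 i) j
  simpa [Matrix.mul_apply, Matrix.conjTranspose_apply, Matrix.one_apply] using this

lemma detdet (hM : M ∈ Matrix.unitaryGroup (Fin 3) ℂ) : conj M.det * M.det = 1 :=
  (Unitary.mem_iff.mp (Matrix.det_of_mem_unitary hM)).1

lemma det_ne (hM : M ∈ Matrix.unitaryGroup (Fin 3) ℂ) : M.det ≠ 0 := by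
  intro h
  simpa [h] using detdet hM

lemma conj_mu : conj (Complex.exp (lam * Complex.I)) = Complex.exp (-(lam * Complex.I)) := by
  rw [← Complex.exp_conj]
  congr 1
  simp

lemma mu_conj_mu : Complex.exp (lam * Complex.I) * conj (Complex.exp (lam * Complex.I)) = 1 := by
  rw [conj_mu, ← Complex.exp_add]
  simp

lemma norm_one_of_mul_conj {z : ℂ} (h : z * conj z = 1) : ‖z‖ = 1 := by
  have h2 : (‖z‖ : ℂ) ^ 2 = 1 := by
    rw [← Complex.mul_conj']; exact_mod_cast h
  have : ‖z‖ ^ 2 = 1 := by exact_mod_cast h2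
  nlinarith [norm_nonneg z]

end QWaux

namespace QWaux

/-- `e^{iλ}`. -/
def mu (lam : ℝ) : ℂ := Complex.exp (lam * Complex.I)

variable (M : Matrix (Fin 3) (Fin 3) ℂ) (lam : ℝ)

def sv : ℂ := mu lam - M 1 1
def AS : ℂ := M 0 0 * sv M lam + M 0 1 * M 1 0
def BS : ℂ := M 0 2 * sv M lam + M 0 1 * M 1 2
def CS : ℂ := M 2 0 * sv M lam + M 2 1 * M 1 0
def DS : ℂ := M 2 2 * sv M lam + M 2 1 * M 1 2

variable {M lam}

lemma c22 (hM : M ∈ Matrix.unitaryGroup (Fin 3) ℂ) :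
    M.det * conj (M 2 2) = M 0 0 * M 1 1 - M 0 1 * M 1 0 := by
  have h := detconj hM 2 2; rw [Matrix.adjugate_fin_three] at h; simp at h
  linear_combination h

lemma c00 (hM : M ∈ Matrix.unitaryGroup (Fin 3) ℂ) :
    M.det * conj (M 0 0) = M 1 1 * M 2 2 - M 1 2 * M 2 1 := by
  have h := detconj hM 0 0; rw [Matrix.adjugate_fin_three] at h; simp at h
  linear_combination h

lemma c11 (hM : M ∈ Matrix.unitaryGroup (Fin 3) ℂ) :
    M.det * conj (M 1 1) = M 0 0 * M 2 2 - M 0 2 * M 2 0 := by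
  have h := detconj hM 1 1; rw [Matrix.adjugate_fin_three] at h; simp at h
  linear_combination h

lemma c20 (hM : M ∈ Matrix.unitaryGroup (Fin 3) ℂ) :
    M.det * conj (M 2 0) = M 0 1 * M 1 2 - M 0 2 * M 1 1 := by
  have h := detconj hM 0 2; rw [Matrix.adjugate_fin_three] at h; simp at h
  linear_combination h

lemma c02 (hM : M ∈ Matrix.unitaryGroup (Fin 3) ℂ) :
    M.det * conj (M 0 2) = M 1 0 * M 2 1 - M 1 1 * M 2 0 := by
  have h := detconj hM 2 0; rw [Matrix.adjugate_fin_three] at h; simp at h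
  linear_combination h

lemma c21 (hM : M ∈ Matrix.unitaryGroup (Fin 3) ℂ) :
    M.det * conj (M 2 1) = -(M 0 0 * M 1 2) + M 0 2 * M 1 0 := by
  have h := detconj hM 1 2; rw [Matrix.adjugate_fin_three] at h; simp at h
  linear_combination h

lemma c12 (hM : M ∈ Matrix.unitaryGroup (Fin 3) ℂ) :
    M.det * conj (M 1 2) = -(M 0 0 * M 2 1) + M 0 1 * M 2 0 := by
  have h := detconj hM 2 1; rw [Matrix.adjugate_fin_three] at h; simp at h
  linear_combination h

lemma c01 (hM : M ∈ Matrix.unitaryGroup (Fin 3) ℂ) :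
    M.det * conj (M 0 1) = -(M 1 0 * M 2 2) + M 1 2 * M 2 0 := by
  have h := detconj hM 1 0; rw [Matrix.adjugate_fin_three] at h; simp at h
  linear_combination h

lemma quad0 :
    AS M lam * DS M lam - BS M lam * CS M lam
      = sv M lam * (mu lam * (M 0 0 * M 2 2 - M 0 2 * M 2 0) - M.det) := by
  simp only [AS, BS, CS, DS, sv, Matrix.det_fin_three]
  ring

/-- the transfer-matrix denominator equals `AS`. -/
lemma e_d (hM : M ∈ Matrix.unitaryGroup (Fin 3) ℂ) :
    M 0 0 * Complex.exp (lam * Complex.I) - M.det * conj (M 2 2) = AS M lam := by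
  simp only [AS, sv, mu]
  linear_combination -c22 hM

lemma e01 (hM : M ∈ Matrix.unitaryGroup (Fin 3) ℂ) :
    -(M 0 2 * Complex.exp (lam * Complex.I)) - M.det * conj (M 2 0) = -BS M lam := by
  simp only [BS, sv, mu]
  linear_combination -c20 hM

lemma e10 (hM : M ∈ Matrix.unitaryGroup (Fin 3) ℂ) :
    M 2 0 * Complex.exp (lam * Complex.I) + M.det * conj (M 0 2) = CS M lam := by
  simp only [CS, sv, mu]
  linear_combination c02 hM

lemma e11 (hM : M ∈ Matrix.unitaryGroup (Fin 3) ℂ) :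
    -(M.det * (Complex.exp (-(lam * Complex.I)) - conj (M 1 1))) * (sv M lam * mu lam)
      = AS M lam * DS M lam - BS M lam * CS M lam := by
  rw [quad0, ← conj_mu]
  simp only [sv, mu]
  linear_combination (M.det * (M 1 1 - Complex.exp (lam * Complex.I))) * (mu_conj_mu (lam := lam))
    + ((Complex.exp (lam * Complex.I) - M 1 1) * Complex.exp (lam * Complex.I)) * c11 hM

/-- When `AS = 0`, `M 0 0 ≠ 0`. -/
lemma z00 (hM : M ∈ Matrix.unitaryGroup (Fin 3) ℂ)
    (h13 : ‖M 0 2‖ ≠ 1) (h31 : ‖M 2 0‖ ≠ 1)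
    (hs : sv M lam ≠ 0) (hA : AS M lam = 0) : M 0 0 ≠ 0 := by
  intro h0
  have h : M 0 1 * M 1 0 = 0 := by
    have := hA; simp only [AS, h0, zero_mul, zero_add] at this; exact this
  rcases mul_eq_zero.mp h with h1 | h1
  · have hr := rowsum hM 0 0
    rw [Fin.sum_univ_three] at hr
    simp only [h0, h1, zero_mul, map_zero, mul_zero, zero_add, if_pos rfl] at hr
    exact h13 (norm_one_of_mul_conj hr)
  · have hr := colsum hM 0 0
    rw [Fin.sum_univ_three] at hr
    simp only [h0, h1, map_zero, zero_mul, mul_zero, zero_add, add_zero, if_pos rfl] at hr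
    norm_num at hr
    have hr' : M 2 0 * conj (M 2 0) = 1 := by linear_combination hr
    exact h31 (norm_one_of_mul_conj hr')

lemma z0110 (hM : M ∈ Matrix.unitaryGroup (Fin 3) ℂ)
    (h13 : ‖M 0 2‖ ≠ 1) (h31 : ‖M 2 0‖ ≠ 1)
    (hs : sv M lam ≠ 0) (hA : AS M lam = 0) : M 0 1 * M 1 0 ≠ 0 := by
  have h0 := z00 hM h13 h31 hs hA
  have h : M 0 1 * M 1 0 = -(M 0 0 * sv M lam) := by
    simp only [AS] at hA; linear_combination hA
  rw [h]
  exact neg_ne_zero.mpr (mul_ne_zero h0 hs)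

lemma K5 (hM : M ∈ Matrix.unitaryGroup (Fin 3) ℂ) (hA : AS M lam = 0) :
    M.det * conj (M 0 0) = mu lam * M 2 2 := by
  have e5a : M.det * conj (M 2 2) = M 0 0 * mu lam := by
    simp only [AS, sv] at hA
    linear_combination c22 hM - hA
  have e5b := congrArg conj e5a
  simp only [_root_.map_mul, Complex.conj_conj] at e5b
  have hdd := detdet hM
  have hmm := mu_conj_mu (lam := lam)
  have key : conj M.det * (M.det * conj (M 0 0)) = conj M.det * (mu lam * M 2 2) := by
    simp only [mu] at e5b hmm ⊢
    linear_combination (conj (M 0 0)) * hdd - Complex.exp (lam * Complex.I) * e5b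
      - (conj (M 0 0)) * hmm
  exact mul_left_cancel₀ (fun h => by simp [h] at hdd) key

lemma K2 (hM : M ∈ Matrix.unitaryGroup (Fin 3) ℂ) (hA : AS M lam = 0) :
    DS M lam = 0 := by
  have h00 := c00 hM
  have h5 := K5 hM hA
  simp only [DS, sv]
  simp only [mu] at h00 h5 ⊢
  linear_combination h00 - h5

lemma K3 (hM : M ∈ Matrix.unitaryGroup (Fin 3) ℂ) (hA : AS M lam = 0) :
    sv M lam * mu lam * (M 2 2 * conj (M 2 1)) = BS M lam * (conj (M 0 0) * M 1 0) := by
  have h21 := c21 hM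
  have h5 := K5 hM hA
  have key : M.det * (sv M lam * mu lam * (M 2 2 * conj (M 2 1)))
      = M.det * (BS M lam * (conj (M 0 0) * M 1 0)) := by
    simp only [AS, BS, sv, mu] at hA h5 ⊢
    linear_combination ((Complex.exp (lam * Complex.I) - M 1 1) * Complex.exp (lam * Complex.I) * M 2 2) * h21
      - ((M 0 2 * (Complex.exp (lam * Complex.I) - M 1 1) + M 0 1 * M 1 2) * M 1 0) * h5
      - (Complex.exp (lam * Complex.I) * M 2 2 * M 1 2) * hA
  exact mul_left_cancel₀ (det_ne hM) key

lemma K4 (hM : M ∈ Matrix.unitaryGroup (Fin 3) ℂ) (hA : AS M lam = 0) :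
    sv M lam * mu lam * (M 2 2 * conj (M 1 2)) = CS M lam * (conj (M 0 0) * M 0 1) := by
  have h12 := c12 hM
  have h5 := K5 hM hA
  have key : M.det * (sv M lam * mu lam * (M 2 2 * conj (M 1 2)))
      = M.det * (CS M lam * (conj (M 0 0) * M 0 1)) := by
    simp only [AS, CS, sv, mu] at hA h5 ⊢
    linear_combination ((Complex.exp (lam * Complex.I) - M 1 1) * Complex.exp (lam * Complex.I) * M 2 2) * h12
      - ((M 2 0 * (Complex.exp (lam * Complex.I) - M 1 1) + M 2 1 * M 1 0) * M 0 1) * h5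
      - (Complex.exp (lam * Complex.I) * M 2 2 * M 2 1) * hA
  exact mul_left_cancel₀ (det_ne hM) key

lemma transfer_mulVec_raw (hM : M ∈ Matrix.unitaryGroup (Fin 3) ℂ) (v : Fin 2 → ℂ) :
    (transfer M lam).mulVec v 0 = (AS M lam)⁻¹ *
      ((Complex.exp (lam * Complex.I) * (Complex.exp (lam * Complex.I) - M 1 1)) * v 0
        + (-(M 0 2 * Complex.exp (lam * Complex.I)) - M.det * conj (M 2 0)) * v 1) ∧
    (transfer M lam).mulVec v 1 = (AS M lam)⁻¹ *
      ((M 2 0 * Complex.exp (lam * Complex.I) + M.det * conj (M 0 2)) * v 0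
        + (-(M.det * (Complex.exp (-(lam * Complex.I)) - conj (M 1 1)))) * v 1) := by
  rw [transfer, e_d hM]
  constructor <;>
  · simp [Matrix.mulVec, dotProduct, Fin.sum_univ_two, Matrix.smul_apply]
    ring

lemma entry_norm_le (hM : M ∈ Matrix.unitaryGroup (Fin 3) ℂ) (i j : Fin 3) :
    ‖M i j‖ ≤ 1 := by
  have h := colsum hM j j
  rw [Fin.sum_univ_three, if_pos rfl] at h
  have h' : (‖M 0 j‖ : ℂ) ^ 2 + (‖M 1 j‖ : ℂ) ^ 2 + (‖M 2 j‖ : ℂ) ^ 2 = 1 := by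
    rw [← Complex.mul_conj', ← Complex.mul_conj', ← Complex.mul_conj']
    linear_combination h
  have hr : ‖M 0 j‖ ^ 2 + ‖M 1 j‖ ^ 2 + ‖M 2 j‖ ^ 2 = 1 := by exact_mod_cast h'
  fin_cases i
  · show ‖M 0 j‖ ≤ 1
    nlinarith [norm_nonneg (M 0 j), norm_nonneg (M 1 j), norm_nonneg (M 2 j)]
  · show ‖M 1 j‖ ≤ 1
    nlinarith [norm_nonneg (M 0 j), norm_nonneg (M 1 j), norm_nonneg (M 2 j)]
  · show ‖M 2 j‖ ≤ 1
    nlinarith [norm_nonneg (M 0 j), norm_nonneg (M 1 j), norm_nonneg (M 2 j)]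

end QWaux

open QWaux

/-- `e^{iλ}` is an eigenvalue of `U` iff there is a nonzero
`Ψ̃ ∈ ℓ²(ℤ;ℂ²)` satisfying the transfer-matrix recursion where `A_x(λ) ≠ 0`,
and the two scalar constraints where `A_x(λ) = 0`. -/
theorem eigenvalue_iff_transfer_recursion (a : ℤ → Matrix (Fin 3) (Fin 3) ℂ)
    (hunit : ∀ x, a x ∈ Matrix.unitaryGroup (Fin 3) ℂ)
    (h13 : ∀ x, ‖a x 0 2‖ ≠ 1) (h22 : ∀ x, ‖a x 1 1‖ ≠ 1) (h31 : ∀ x, ‖a x 2 0‖ ≠ 1)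
    (lam : ℝ) (hlam : lam ∈ Set.Ico 0 (2 * Real.pi))
    (hinf : 0 < ⨅ x : ℤ, ‖Complex.exp (lam * Complex.I) - a x 1 1‖) :
    IsQWEigenvalue a (Complex.exp (lam * Complex.I)) ↔
      ∃ Ψ : ℤ → Fin 2 → ℂ, Ψ ≠ 0 ∧
        Summable (fun x : ℤ => ∑ i, ‖Ψ x i‖ ^ 2) ∧
        ∀ x : ℤ,
          (coefA (a x) lam ≠ 0 → (transfer (a x) lam).mulVec (Ψ x) = Ψ (x + 1)) ∧
          (coefA (a x) lam = 0 →
            conj (a x 0 0) * a x 1 0 * Ψ x 0 = a x 2 2 * conj (a x 2 1) * Ψ x 1 ∧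
            a x 2 2 * conj (a x 1 2) * Ψ (x + 1) 0 =
              conj (a x 0 0) * a x 0 1 * Ψ (x + 1) 1) := by
  have hbdd : BddBelow (Set.range fun x : ℤ => ‖Complex.exp (lam * Complex.I) - a x 1 1‖) :=
    ⟨0, by rintro r ⟨x, rfl⟩; positivity⟩
  set ε := ⨅ x : ℤ, ‖Complex.exp (lam * Complex.I) - a x 1 1‖ with hεdef
  have hεle : ∀ x : ℤ, ε ≤ ‖Complex.exp (lam * Complex.I) - a x 1 1‖ :=
    fun x => ciInf_le hbdd x
  have hsu : ∀ x : ℤ, Complex.exp (lam * Complex.I) - a x 1 1 ≠ 0 := by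
    intro x h
    have h2 := hεle x
    rw [h, norm_zero] at h2
    linarith
  have hs : ∀ x : ℤ, sv (a x) lam ≠ 0 := hsu
  have hsμ : ∀ x : ℤ, (Complex.exp (lam * Complex.I) - a x 1 1) * Complex.exp (lam * Complex.I) ≠ 0 :=
    fun x => mul_ne_zero (hsu x) (Complex.exp_ne_zero _)
  have hcoefA : ∀ x : ℤ, coefA (a x) lam * sv (a x) lam = AS (a x) lam := by
    intro x
    have h := hsu x
    simp only [coefA, AS, sv, mu]
    field_simp
  rw [IsQWEigenvalue]
  constructor
  · rintro ⟨Ψ, hne, hsum, heq⟩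
    refine ⟨fun x => ![Ψ (x - 1) 0, Ψ x 2], ?_, ?_, ?_⟩
    · -- nonzero
      intro h
      apply hne
      funext x
      have h0 : Ψ x 0 = 0 := by
        have h' := congrFun (congrFun h (x + 1)) 0
        have hx : x + 1 - 1 = x := by omega
        simpa [hx] using h'
      have h2 : Ψ x 2 = 0 := by
        have h' := congrFun (congrFun h x) 1
        simpa using h'
      have h1 : Ψ x 1 = 0 := by
        have he := (heq x).2.1
        rw [Fin.sum_univ_three] at he
        have hz : (Complex.exp (lam * Complex.I) - a x 1 1) * Ψ x 1 = 0 := by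
          rw [h0, h2] at he
          linear_combination he
        exact (mul_eq_zero.mp hz).resolve_left (hsu x)
      funext i
      fin_cases i
      · exact h0
      · exact h1
      · exact h2
    · -- summable
      have hsum0 : Summable fun x : ℤ => ‖Ψ x 0‖ ^ 2 :=
        Summable.of_nonneg_of_le (fun x => by positivity)
          (fun x => Finset.single_le_sum (f := fun i => ‖Ψ x i‖ ^ 2)
            (fun i _ => by positivity) (Finset.mem_univ 0)) hsum
      have hsum2 : Summable fun x : ℤ => ‖Ψ x 2‖ ^ 2 :=
        Summable.of_nonneg_of_le (fun x => by positivity)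
          (fun x => Finset.single_le_sum (f := fun i => ‖Ψ x i‖ ^ 2)
            (fun i _ => by positivity) (Finset.mem_univ 2)) hsum
      have hshift : Summable fun x : ℤ => ‖Ψ (x - 1) 0‖ ^ 2 := by
        have h := (Equiv.subRight (1 : ℤ)).summable_iff.mpr hsum0
        refine h.congr fun x => ?_
        simp [Equiv.subRight]
      refine (hshift.add hsum2).congr fun x => ?_
      rw [Fin.sum_univ_two]
      simp
    · -- recursions
      intro x
      have hx1 : x - 1 + 1 = x := by omega
      have hx2 : x + 1 - 1 = x := by omega
      have hE1 : Complex.exp (lam * Complex.I) * Ψ (x - 1) 0 = ∑ j, a x 0 j * Ψ x j := by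
        have h' := (heq (x - 1)).1
        rw [hx1] at h'
        exact h'
      have hE2 := (heq x).2.1
      have hE3 : Complex.exp (lam * Complex.I) * Ψ (x + 1) 2 = ∑ j, a x 2 j * Ψ x j := by
        have h' := (heq (x + 1)).2.2
        rw [hx2] at h'
        exact h'
      rw [Fin.sum_univ_three] at hE1 hE2 hE3
      have E1 : (Complex.exp (lam * Complex.I) - a x 1 1) *
            (Complex.exp (lam * Complex.I) * Ψ (x - 1) 0)
          = (a x 0 0 * (Complex.exp (lam * Complex.I) - a x 1 1) + a x 0 1 * a x 1 0) * Ψ x 0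
            + (a x 0 2 * (Complex.exp (lam * Complex.I) - a x 1 1) + a x 0 1 * a x 1 2) * Ψ x 2 := by
        linear_combination (Complex.exp (lam * Complex.I) - a x 1 1) * hE1 + a x 0 1 * hE2
      have E3 : (Complex.exp (lam * Complex.I) - a x 1 1) *
            (Complex.exp (lam * Complex.I) * Ψ (x + 1) 2)
          = (a x 2 0 * (Complex.exp (lam * Complex.I) - a x 1 1) + a x 2 1 * a x 1 0) * Ψ x 0
            + (a x 2 2 * (Complex.exp (lam * Complex.I) - a x 1 1) + a x 2 1 * a x 1 2) * Ψ x 2 := by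
        linear_combination (Complex.exp (lam * Complex.I) - a x 1 1) * hE3 + a x 2 1 * hE2
      constructor
      · -- coefA ≠ 0
        intro hA
        have hAS : AS (a x) lam ≠ 0 := by
          rw [← hcoefA x]; exact mul_ne_zero hA (hs x)
        obtain ⟨ht0, ht1⟩ := transfer_mulVec_raw (lam := lam) (hunit x)
          ![Ψ (x - 1) 0, Ψ x 2]
        have he01 := e01 (lam := lam) (hunit x)
        have he10 := e10 (lam := lam) (hunit x)
        have he11 := e11 (lam := lam) (hunit x)
        have hASu := hAS
        simp only [AS, BS, CS, DS, sv, mu] at he01 he10 he11 hASu ht0 ht1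
        simp only [Matrix.cons_val_zero, Matrix.cons_val_one, Matrix.head_cons] at ht0 ht1
        have comp0 : (transfer (a x) lam).mulVec ![Ψ (x - 1) 0, Ψ x 2] 0 = Ψ x 0 := by
          rw [ht0, inv_mul_eq_iff_eq_mul₀ hASu]
          linear_combination E1 + Ψ x 2 * he01
        have comp1 : (transfer (a x) lam).mulVec ![Ψ (x - 1) 0, Ψ x 2] 1 = Ψ (x + 1) 2 := by
          rw [ht1, inv_mul_eq_iff_eq_mul₀ hASu]
          refine mul_left_cancel₀ (hsμ x) ?_
          linear_combination ((Complex.exp (lam * Complex.I) - a x 1 1) *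
              Complex.exp (lam * Complex.I) * Ψ (x - 1) 0) * he10
            + Ψ x 2 * he11
            + (a x 2 0 * (Complex.exp (lam * Complex.I) - a x 1 1) + a x 2 1 * a x 1 0) * E1
            - (a x 0 0 * (Complex.exp (lam * Complex.I) - a x 1 1) + a x 0 1 * a x 1 0) * E3
        funext i
        fin_cases i
        · simpa only [Fin.zero_eta, Matrix.cons_val_zero, hx2] using comp0
        · simpa only [Fin.mk_one, Matrix.cons_val_one, Matrix.head_cons, Matrix.cons_val_zero] using comp1
      · -- coefA = 0
        intro hA0
        have hAS : AS (a x) lam = 0 := by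
          rw [← hcoefA x, hA0, zero_mul]
        have hK3 := K3 (hunit x) hAS
        have hK4 := K4 (hunit x) hAS
        have hK2 := K2 (hunit x) hAS
        have hASu := hAS
        simp only [AS, BS, CS, DS, sv, mu] at hK3 hK4 hK2 hASu
        constructor
        · simp only [Matrix.cons_val_zero, Matrix.cons_val_one, Matrix.head_cons]
          refine mul_left_cancel₀ (hsμ x) ?_
          linear_combination (conj (a x 0 0) * a x 1 0) * E1 - Ψ x 2 * hK3
            + (conj (a x 0 0) * a x 1 0 * Ψ x 0) * hASu
        · simp only [Matrix.cons_val_zero, Matrix.cons_val_one, Matrix.head_cons, hx2]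
          refine mul_left_cancel₀ (hsμ x) ?_
          linear_combination Ψ x 0 * hK4 - (conj (a x 0 0) * a x 0 1) * E3
            - (conj (a x 0 0) * a x 0 1 * Ψ x 2) * hK2
  · rintro ⟨Φ, hΦne, hΦsum, hrec⟩
    have S : ∀ y : ℤ,
        (Complex.exp (lam * Complex.I) - a y 1 1) * (Complex.exp (lam * Complex.I) * Φ y 0)
          = (a y 0 0 * (Complex.exp (lam * Complex.I) - a y 1 1) + a y 0 1 * a y 1 0) * Φ (y + 1) 0
            + (a y 0 2 * (Complex.exp (lam * Complex.I) - a y 1 1) + a y 0 1 * a y 1 2) * Φ y 1 ∧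
        (Complex.exp (lam * Complex.I) - a y 1 1) * (Complex.exp (lam * Complex.I) * Φ (y + 1) 1)
          = (a y 2 0 * (Complex.exp (lam * Complex.I) - a y 1 1) + a y 2 1 * a y 1 0) * Φ (y + 1) 0
            + (a y 2 2 * (Complex.exp (lam * Complex.I) - a y 1 1) + a y 2 1 * a y 1 2) * Φ y 1 := by
      intro y
      by_cases hA : AS (a y) lam = 0
      · have h' := hcoefA y
        rw [hA] at h'
        have hc0 : coefA (a y) lam = 0 := (mul_eq_zero.mp h').resolve_right (hs y)
        obtain ⟨con1, con2⟩ := (hrec y).2 hc0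
        have hz00 := z00 (hunit y) (h13 y) (h31 y) (hs y) hA
        have hz := z0110 (hunit y) (h13 y) (h31 y) (hs y) hA
        have hz01 : a y 0 1 ≠ 0 := fun h => hz (by rw [h, zero_mul])
        have hz10 : a y 1 0 ≠ 0 := fun h => hz (by rw [h, mul_zero])
        have hc00 : conj (a y 0 0) ≠ 0 := by
          simp only [ne_eq, map_eq_zero]; exact hz00
        have hK3 := K3 (hunit y) hA
        have hK4 := K4 (hunit y) hA
        have hK2 := K2 (hunit y) hA
        have hAu := hA
        simp only [AS, BS, CS, DS, sv, mu] at hAu hK3 hK4 hK2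
        constructor
        · refine mul_left_cancel₀ (mul_ne_zero hc00 hz10) ?_
          linear_combination ((Complex.exp (lam * Complex.I) - a y 1 1) *
              Complex.exp (lam * Complex.I)) * con1
            + Φ y 1 * hK3 - (conj (a y 0 0) * a y 1 0 * Φ (y + 1) 0) * hAu
        · refine mul_left_cancel₀ (mul_ne_zero hc00 hz01) ?_
          linear_combination -(((Complex.exp (lam * Complex.I) - a y 1 1) *
              Complex.exp (lam * Complex.I)) * con2)
            + Φ (y + 1) 0 * hK4 - (conj (a y 0 0) * a y 0 1 * Φ y 1) * hK2
      · have hc0 : coefA (a y) lam ≠ 0 := fun h => hA (by rw [← hcoefA y, h, zero_mul])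
        have ht := (hrec y).1 hc0
        obtain ⟨ht0', ht1'⟩ := transfer_mulVec_raw (lam := lam) (hunit y) (Φ y)
        have ht0 := congrFun ht 0
        have ht1 := congrFun ht 1
        rw [ht0', inv_mul_eq_iff_eq_mul₀ hA] at ht0
        rw [ht1', inv_mul_eq_iff_eq_mul₀ hA] at ht1
        have he01 := e01 (lam := lam) (hunit y)
        have he10 := e10 (lam := lam) (hunit y)
        have he11 := e11 (lam := lam) (hunit y)
        have hAu := hA
        simp only [AS, BS, CS, DS, sv, mu] at ht0 ht1 he01 he10 he11 hAu
        constructor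
        · linear_combination ht0 - Φ y 1 * he01
        · refine mul_left_cancel₀ hAu ?_
          linear_combination -(((Complex.exp (lam * Complex.I) - a y 1 1) *
                Complex.exp (lam * Complex.I)) * ht1)
            + (a y 2 0 * (Complex.exp (lam * Complex.I) - a y 1 1) + a y 2 1 * a y 1 0) * ht0
            + ((Complex.exp (lam * Complex.I) - a y 1 1) * Complex.exp (lam * Complex.I) * Φ y 0) * he10
            + Φ y 1 * he11
            - ((a y 2 0 * (Complex.exp (lam * Complex.I) - a y 1 1) + a y 2 1 * a y 1 0) * Φ y 1) * he01
    refine ⟨fun y => ![Φ (y + 1) 0,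
        (a y 1 0 * Φ (y + 1) 0 + a y 1 2 * Φ y 1) / (Complex.exp (lam * Complex.I) - a y 1 1),
        Φ y 1], ?_, ?_, ?_⟩
    · -- nonzero
      intro h
      apply hΦne
      funext y i
      fin_cases i
      · have hy : y - 1 + 1 = y := by omega
        have h' := congrFun (congrFun h (y - 1)) 0
        simp only [Matrix.cons_val_zero, Pi.zero_apply] at h'
        rw [hy] at h'
        exact h'
      · have h' := congrFun (congrFun h y) 2
        simpa using h'
    · -- summable
      have hsΦ1 : Summable fun y : ℤ => (∑ i : Fin 2, ‖Φ (y + 1) i‖ ^ 2) := by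
        have h := (Equiv.addRight (1 : ℤ)).summable_iff.mpr hΦsum
        refine h.congr fun y => ?_
        simp [Equiv.addRight]
      have hkey : Summable fun y : ℤ => (1 + 2 / ε ^ 2) *
          ((∑ i : Fin 2, ‖Φ (y + 1) i‖ ^ 2) + ∑ i : Fin 2, ‖Φ y i‖ ^ 2) :=
        (hsΦ1.add hΦsum).mul_left _
      refine Summable.of_nonneg_of_le (fun y => by positivity) (fun y => ?_) hkey
      have h10 := entry_norm_le (hunit y) 1 0
      have h12 := entry_norm_le (hunit y) 1 2
      have hde : ε ≤ ‖Complex.exp (lam * Complex.I) - a y 1 1‖ := hεle y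
      have hnum : ‖a y 1 0 * Φ (y + 1) 0 + a y 1 2 * Φ y 1‖ ≤ ‖Φ (y + 1) 0‖ + ‖Φ y 1‖ := by
        refine (norm_add_le _ _).trans ?_
        rw [norm_mul, norm_mul]
        nlinarith [norm_nonneg (Φ (y + 1) 0), norm_nonneg (Φ y 1),
          norm_nonneg (a y 1 0), norm_nonneg (a y 1 2)]
      have hε2 : (0:ℝ) < ε ^ 2 := by positivity
      have hmid : ‖(a y 1 0 * Φ (y + 1) 0 + a y 1 2 * Φ y 1) /
            (Complex.exp (lam * Complex.I) - a y 1 1)‖ ^ 2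
          ≤ 2 / ε ^ 2 * (‖Φ (y + 1) 0‖ ^ 2 + ‖Φ y 1‖ ^ 2) := by
        rw [norm_div]
        have h1 : ‖a y 1 0 * Φ (y + 1) 0 + a y 1 2 * Φ y 1‖ /
              ‖Complex.exp (lam * Complex.I) - a y 1 1‖
            ≤ (‖Φ (y + 1) 0‖ + ‖Φ y 1‖) / ε := div_le_div₀ (by positivity) hnum hinf hde
        calc (‖a y 1 0 * Φ (y + 1) 0 + a y 1 2 * Φ y 1‖ /
              ‖Complex.exp (lam * Complex.I) - a y 1 1‖) ^ 2
            ≤ ((‖Φ (y + 1) 0‖ + ‖Φ y 1‖) / ε) ^ 2 :=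
              pow_le_pow_left₀ (by positivity) h1 2
          _ ≤ 2 / ε ^ 2 * (‖Φ (y + 1) 0‖ ^ 2 + ‖Φ y 1‖ ^ 2) := by
              rw [div_pow]
              rw [show (2:ℝ) / ε ^ 2 * (‖Φ (y + 1) 0‖ ^ 2 + ‖Φ y 1‖ ^ 2)
                  = (2 * (‖Φ (y + 1) 0‖ ^ 2 + ‖Φ y 1‖ ^ 2)) / ε ^ 2 by ring]
              exact (div_le_div_iff_of_pos_right hε2).mpr
                (by nlinarith [sq_nonneg (‖Φ (y + 1) 0‖ - ‖Φ y 1‖)])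
      rw [Fin.sum_univ_three, Fin.sum_univ_two, Fin.sum_univ_two]
      simp only [Matrix.cons_val_zero, Matrix.cons_val_one, Matrix.head_cons,
        Matrix.cons_val_two, Matrix.tail_cons]
      have h2ε : (0:ℝ) ≤ 2 / ε ^ 2 := by positivity
      nlinarith [hmid, sq_nonneg ‖Φ (y + 1) 1‖, sq_nonneg ‖Φ y 0‖,
        mul_nonneg h2ε (sq_nonneg ‖Φ (y + 1) 1‖), mul_nonneg h2ε (sq_nonneg ‖Φ y 0‖)]
    · -- eigen equations
      intro x
      have hx1 : x - 1 + 1 = x := by omega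
      obtain ⟨S1x1, -⟩ := S (x + 1)
      obtain ⟨-, S2xm⟩ := S (x - 1)
      rw [hx1] at S2xm
      have hsx : Complex.exp (lam * Complex.I) - a x 1 1 ≠ 0 := hsu x
      have hsx1 : Complex.exp (lam * Complex.I) - a (x + 1) 1 1 ≠ 0 := hsu (x + 1)
      have hsxm : Complex.exp (lam * Complex.I) - a (x - 1) 1 1 ≠ 0 := hsu (x - 1)
      refine ⟨?_, ?_, ?_⟩
      · rw [Fin.sum_univ_three]
        simp only [Matrix.cons_val_zero, Matrix.cons_val_one, Matrix.head_cons,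
          Matrix.cons_val_two, Matrix.tail_cons]
        field_simp
        linear_combination S1x1
      · rw [Fin.sum_univ_three]
        simp only [Matrix.cons_val_zero, Matrix.cons_val_one, Matrix.head_cons,
          Matrix.cons_val_two, Matrix.tail_cons]
        field_simp
        ring
      · rw [Fin.sum_univ_three]
        simp only [Matrix.cons_val_zero, Matrix.cons_val_one, Matrix.head_cons,
          Matrix.cons_val_two, Matrix.tail_cons, hx1]
        field_simp
        linear_combination S2xm
end
end
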